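/- The Rota-Baxter algebra (kF_X^a, ⋄_a, B⁺) together with the map i_X : X → kF_X^a, x ↦ •x• (the length-2 forest of two single-vertex trees with angle decorated by x), is the free non-commutative unitary Rota-Baxter algebra of weight λ on X: for any unitary Rota-Baxter k-algebra (R, P) of weight λ and any set map f : X → R, there is a unique homomorphism of unitary Rota-Baxter algebras f̄ : kF_X^a → R (a unital k-algebra homomorphism with f̄ ∘ B⁺ = P ∘ f̄) such that f̄ ∘ i_X = f. -/

import Mathlib

set_option linter.unreachableTactic false
set_option linter.unnecessarySeqFocus false
set_option linter.unusedTactic false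

/-! Angularly decorated planar rooted trees and forests over a decoration set `X`.
A tree is either the single-vertex tree `•` (leaf) or the grafting `B⁺(F)` of a forest;
a forest is an alternating word `T₁ x₁ T₂ x₂ ⋯ x_{ℓ-1} T_ℓ` of trees and decorations. -/
mutual
  inductive ATree (X : Type) : Type
    | leaf : ATree X
    | graft : AForest X → ATree X
  inductive AForest (X : Type) : Type
    | single : ATree X → AForest X
    | cons : ATree X → X → AForest X → AForest X
end

mutual
  /-- Depth of an angularly decorated tree. -/
  def ATree.depth {X : Type} : ATree X → ℕ
    | .leaf => 0
    | .graft F => AForest.depth F + 1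
  /-- Depth of an angularly decorated forest. -/
  def AForest.depth {X : Type} : AForest X → ℕ
    | .single T => ATree.depth T
    | .cons T _ F => max (ATree.depth T) (AForest.depth F)
end

mutual
  /-- An auxiliary size of an angularly decorated tree. -/
  def ATree.size {X : Type} : ATree X → ℕ
    | .leaf => 1
    | .graft F => AForest.size F + 1
  /-- An auxiliary size of an angularly decorated forest. -/
  def AForest.size {X : Type} : AForest X → ℕ
    | .single T => ATree.size T + 1
    | .cons T _ F => ATree.size T + AForest.size F + 1
end

mutual
  /-- The number of vertices of an angularly decorated tree. -/
  def ATree.deg {X : Type} : ATree X → ℕ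
    | .leaf => 1
    | .graft F => AForest.deg F + 1
  /-- The number of vertices of an angularly decorated forest. -/
  def AForest.deg {X : Type} : AForest X → ℕ
    | .single T => ATree.deg T
    | .cons T _ F => ATree.deg T + AForest.deg F
end

/-- Auxiliary lemma for termination proofs. -/
theorem natlex_of_le_of_lt {a₁ a₂ b₁ b₂ : ℕ} (h1 : a₁ ≤ a₂) (h2 : b₁ < b₂) :
    Prod.Lex (fun x y : ℕ => x < y) (fun x y : ℕ => x < y) (a₁, b₁) (a₂, b₂) := by
  rcases lt_or_eq_of_le h1 with h | rfl
  · exact Prod.Lex.left _ _ h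
  · exact Prod.Lex.right _ h2

/-- `RBF k X` is the free `k`-module on the set of angularly decorated rooted forests. -/
abbrev RBF (k X : Type) [CommRing k] := AForest X →₀ k

mutual
  /-- The product `⋄ₐ` on basis trees (with values in the free module on trees). -/
  noncomputable def mulT {k X : Type} [CommRing k] (lam : k) :
      ATree X → ATree X → (ATree X →₀ k)
    | .leaf, T' => Finsupp.single T' 1
    | T, .leaf => Finsupp.single T 1
    | .graft F, .graft F' =>
        Finsupp.mapDomain ATree.graft (mulF lam (.single (.graft F)) F')
          + Finsupp.mapDomain ATree.graft (mulF lam F (.single (.graft F')))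
          + lam • Finsupp.mapDomain ATree.graft (mulF lam F F')
  termination_by T T' => (ATree.depth T + ATree.depth T', ATree.size T + ATree.size T')
  decreasing_by
    all_goals
      first
        | (apply Prod.Lex.left
           simp [ATree.depth, AForest.depth] <;> omega)
        | (apply natlex_of_le_of_lt <;>
            simp [ATree.depth, AForest.depth, ATree.size, AForest.size] <;>
            omega)
  /-- The product `⋄ₐ` on basis forests. -/
  noncomputable def mulF {k X : Type} [CommRing k] (lam : k) :
      AForest X → AForest X → RBF k X
    | .single T, .single T' => Finsupp.mapDomain AForest.single (mulT lam T T')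
    | .single T, .cons T' y G' =>
        Finsupp.mapDomain (fun t => AForest.cons t y G') (mulT lam T T')
    | .cons T x G, F' => Finsupp.mapDomain (fun g => AForest.cons T x g) (mulF lam G F')
  termination_by F F' => (AForest.depth F + AForest.depth F', AForest.size F + AForest.size F')
  decreasing_by
    all_goals
      first
        | (apply Prod.Lex.left
           simp [ATree.depth, AForest.depth] <;> omega)
        | (apply natlex_of_le_of_lt <;>
            simp [ATree.depth, AForest.depth, ATree.size, AForest.size] <;>
            omega)
end

open scoped TensorProduct

variable {k X : Type} [CommRing k]

/-- The unit `•` of the Rota-Baxter algebra `kF_X^a`: the single-vertex tree. -/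
noncomputable def RBF.one : RBF k X := Finsupp.single (AForest.single ATree.leaf) 1

/-- The canonical basis inclusion of forests into `kF_X^a`. -/
noncomputable def RBF.of (F : AForest X) : RBF k X := Finsupp.single F 1

/-- The natural map `i_X : X → kF_X^a`, `x ↦ • x •`. -/
noncomputable def RBF.iX (x : X) : RBF k X :=
  RBF.of (AForest.cons ATree.leaf x (AForest.single ATree.leaf))

/-- The grafting operator `B⁺` as a `k`-linear operator on `kF_X^a`. -/
noncomputable def RBF.Bplus : RBF k X →ₗ[k] RBF k X :=
  Finsupp.lmapDomain k k (fun F => AForest.single (ATree.graft F))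

/-- The multiplication `⋄ₐ` on `kF_X^a` as a `k`-bilinear map. -/
noncomputable def RBF.mul (lam : k) : RBF k X →ₗ[k] RBF k X →ₗ[k] RBF k X :=
  Finsupp.lift _ k _ fun F => Finsupp.lift _ k _ fun F' => mulF lam F F'

/-- Concatenation of two forests with the angle between them decorated by `x`. -/
def concatA (x : X) : AForest X → AForest X → AForest X
  | .single T, F' => .cons T x F'
  | .cons T y G, F' => .cons T y (concatA x G F')

/-- Concatenation with middle angle decorated by `x`, as a bilinear map on `kF_X^a`. -/
noncomputable def RBF.concat (x : X) : RBF k X →ₗ[k] RBF k X →ₗ[k] RBF k X :=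
  Finsupp.lift _ k _ fun F => Finsupp.lift _ k _ fun F' => RBF.of (concatA x F F')

/-- Given two bilinear maps `f g` on a module `M`, the bilinear map on `M ⊗ M` sending
`(a ⊗ b, c ⊗ d)` to `f a c ⊗ g b d`. -/
noncomputable def mixMap {M : Type} [AddCommGroup M] [Module k M]
    (f g : M →ₗ[k] M →ₗ[k] M) :
    (M ⊗[k] M) →ₗ[k] (M ⊗[k] M) →ₗ[k] (M ⊗[k] M) :=
  TensorProduct.curry
    ((TensorProduct.map (TensorProduct.lift f) (TensorProduct.lift g)).comp
      (TensorProduct.tensorTensorTensorComm k M M M M).toLinearMap)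

mutual
  /-- The angular coproduct of a basis tree: the sum of `cl(H) ⊗ T/H` over all
  subforests `H ⊑ T` (sequences of mutually disjoint full subtrees and bare angular
  decorations in planar order). -/
  noncomputable def coT (lam : k) : ATree X → RBF k X ⊗[k] RBF k X
    | .leaf => RBF.one ⊗ₜ[k] RBF.one
    | .graft F => (RBF.of (AForest.single (ATree.graft F))) ⊗ₜ[k] RBF.one
        + (LinearMap.lTensor (RBF k X) RBF.Bplus) (coF lam F)
  /-- The angular coproduct of a basis forest: the sum of `cl(H) ⊗ F/H` over all
  subforests `H ⊑ F`. -/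
  noncomputable def coF (lam : k) : AForest X → RBF k X ⊗[k] RBF k X
    | .single T => coT lam T
    | .cons T x G =>
        mixMap (RBF.concat x) (RBF.mul lam) (coT lam T) (coF lam G)
          + mixMap (RBF.mul lam) (RBF.concat x) (coT lam T) (coF lam G)
end

/-- The angular coproduct `Δₐ : kF_X^a → kF_X^a ⊗ kF_X^a`,
`Δₐ(F) = Σ_{H ⊑ F} cl(H) ⊗ F/H`. -/
noncomputable def RBF.Delta (lam : k) : RBF k X →ₗ[k] RBF k X ⊗[k] RBF k X :=
  Finsupp.lift _ k _ fun F => coF lam F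

/-- The counit `εₐ : kF_X^a → k` sending the single-vertex tree `•` to `1` and every
other forest to `0`. -/
noncomputable def RBF.eps : RBF k X →ₗ[k] k :=
  Finsupp.lift _ k _ fun F =>
    match F with
    | .single .leaf => (1 : k)
    | _ => 0

/-- The unit map `u : k → kF_X^a`, `c ↦ c •`. -/
noncomputable def RBF.unit : k →ₗ[k] RBF k X :=
  LinearMap.toSpanSingleton k (RBF k X) RBF.one

section FreeRBAux

variable {k X : Type} [CommRing k] {R : Type} [Ring R] [Algebra k R]

mutual
  /-- Value of the induced map on a basis tree. -/
  def phiT (f : X → R) (P : R →ₗ[k] R) : ATree X → R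
    | .leaf => 1
    | .graft F => P (phiF f P F)
  /-- Value of the induced map on a basis forest. -/
  def phiF (f : X → R) (P : R →ₗ[k] R) : AForest X → R
    | .single T => phiT f P T
    | .cons T x G => phiT f P T * (f x * phiF f P G)
end

/-- The induced linear map on `kF_X^a`. -/
noncomputable def phiHatF (f : X → R) (P : R →ₗ[k] R) : RBF k X →ₗ[k] R :=
  Finsupp.linearCombination k (phiF f P)

/-- The induced linear map on the free module on trees. -/
noncomputable def phiHatT (f : X → R) (P : R →ₗ[k] R) : (ATree X →₀ k) →ₗ[k] R :=
  Finsupp.linearCombination k (phiT f P)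

theorem phiHatF_of (f : X → R) (P : R →ₗ[k] R) (F : AForest X) :
    phiHatF f P (RBF.of F) = phiF f P F := by
  simp [phiHatF, RBF.of]

theorem phiHatT_mapDomain_graft (f : X → R) (P : R →ₗ[k] R) (c : AForest X →₀ k) :
    phiHatT f P (Finsupp.mapDomain ATree.graft c) = P (phiHatF f P c) := by
  rw [phiHatT, Finsupp.linearCombination_mapDomain, phiHatF, Finsupp.apply_linearCombination]
  rfl

theorem mul_basic (lam : k) (F F' : AForest X) :
    RBF.mul (k := k) (X := X) lam (RBF.of F) (RBF.of F') = mulF lam F F' := by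
  simp [RBF.mul, RBF.of, Finsupp.lift_apply, Finsupp.sum_single_index]

theorem mulT_leaf_right (lam : k) (T : ATree X) :
    mulT (k := k) lam T .leaf = Finsupp.single T 1 := by
  cases T <;> simp [mulT]

theorem mulF_one_left (lam : k) (G : AForest X) :
    mulF (k := k) lam (.single .leaf) G = RBF.of G := by
  cases G <;> simp [mulF, mulT, RBF.of, Finsupp.mapDomain_single]

theorem of_cons (lam : k) (T : ATree X) (x : X) (G : AForest X) :
    RBF.of (AForest.cons T x G)
      = RBF.mul (k := k) lam (RBF.of (.single T))
          (RBF.mul lam (RBF.iX x) (RBF.of G)) := by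
  rw [RBF.iX, mul_basic]
  have h1 : mulF (k := k) lam (AForest.cons ATree.leaf x (AForest.single ATree.leaf)) G
      = RBF.of (AForest.cons ATree.leaf x G) := by
    simp [mulF, mulF_one_left, RBF.of, Finsupp.mapDomain_single]
  rw [h1, mul_basic]
  simp [mulF, mulT_leaf_right, RBF.of, Finsupp.mapDomain_single]

mutual
theorem mulT_hom (lam : k) (f : X → R) (P : R →ₗ[k] R)
    (hP : ∀ u v : R, P u * P v = P (u * P v) + P (P u * v) + lam • P (u * v)) :
    ∀ T T' : ATree X, phiHatT f P (mulT lam T T') = phiT f P T * phiT f P T'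
  | .leaf, T' => by
      simp [mulT, phiHatT, phiT]
  | .graft F, .leaf => by
      simp [mulT, phiHatT, phiT]
  | .graft F, .graft F' => by
      rw [show mulT (k := k) lam (.graft F) (.graft F')
          = Finsupp.mapDomain ATree.graft (mulF lam (.single (.graft F)) F')
            + Finsupp.mapDomain ATree.graft (mulF lam F (.single (.graft F')))
            + lam • Finsupp.mapDomain ATree.graft (mulF lam F F') from by
        simp [mulT]]
      rw [map_add, map_add, map_smul, phiHatT_mapDomain_graft, phiHatT_mapDomain_graft,
        phiHatT_mapDomain_graft,
        mulF_hom lam f P hP (.single (.graft F)) F',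
        mulF_hom lam f P hP F (.single (.graft F')),
        mulF_hom lam f P hP F F']
      have hu := hP (phiF f P F) (phiF f P F')
      simp only [phiT, phiF] at *
      rw [hu]
      congr 1
      apply add_comm
  termination_by T T' => (ATree.depth T + ATree.depth T', ATree.size T + ATree.size T')
  decreasing_by
    all_goals
      first
        | (apply Prod.Lex.left
           simp [ATree.depth, AForest.depth] <;> omega)
        | (apply natlex_of_le_of_lt <;>
            simp [ATree.depth, AForest.depth, ATree.size, AForest.size] <;>
            omega)
theorem mulF_hom (lam : k) (f : X → R) (P : R →ₗ[k] R)
    (hP : ∀ u v : R, P u * P v = P (u * P v) + P (P u * v) + lam • P (u * v)) :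
    ∀ F F' : AForest X, phiHatF f P (mulF lam F F') = phiF f P F * phiF f P F'
  | .single T, .single T' => by
      rw [show mulF (k := k) lam (.single T) (.single T')
          = Finsupp.mapDomain AForest.single (mulT lam T T') from by simp [mulF]]
      rw [phiHatF, Finsupp.linearCombination_mapDomain]
      have hfun : (phiF f P ∘ AForest.single : ATree X → R) = phiT f P := by
        funext T; simp [phiF]
      rw [hfun]
      exact mulT_hom lam f P hP T T'
  | .single T, .cons T' y G' => by
      rw [show mulF (k := k) lam (.single T) (.cons T' y G')
          = Finsupp.mapDomain (fun t => AForest.cons t y G') (mulT lam T T') from by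
        simp [mulF]]
      rw [phiHatF, Finsupp.linearCombination_mapDomain]
      have hfun : (phiF f P ∘ fun t => AForest.cons t y G')
          = (⇑(LinearMap.mulRight k (f y * phiF f P G')) ∘ phiT f P) := by
        funext t; simp [phiF, mul_assoc]
      rw [hfun, ← Finsupp.apply_linearCombination]
      rw [show Finsupp.linearCombination k (phiT f P) = phiHatT f P from rfl,
        mulT_hom lam f P hP T T']
      simp [phiF, mul_assoc]
  | .cons T x G, F' => by
      rw [show mulF (k := k) lam (.cons T x G) F'
          = Finsupp.mapDomain (fun g => AForest.cons T x g) (mulF lam G F') from by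
        simp [mulF]]
      rw [phiHatF, Finsupp.linearCombination_mapDomain]
      have hfun : (phiF f P ∘ fun g => AForest.cons T x g)
          = (⇑(LinearMap.mulLeft k (phiT f P T * f x)) ∘ phiF f P) := by
        funext g; simp [phiF, mul_assoc]
      rw [hfun, ← Finsupp.apply_linearCombination]
      rw [show Finsupp.linearCombination k (phiF f P) = phiHatF f P from rfl,
        mulF_hom lam f P hP G F']
      simp [phiF, mul_assoc]
  termination_by F F' => (AForest.depth F + AForest.depth F', AForest.size F + AForest.size F')
  decreasing_by
    all_goals
      first
        | (apply Prod.Lex.left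
           simp [ATree.depth, AForest.depth] <;> omega)
        | (apply natlex_of_le_of_lt <;>
            simp [ATree.depth, AForest.depth, ATree.size, AForest.size] <;>
            omega)
end

mutual
theorem uniq_T (lam : k) (f : X → R) (P : R →ₗ[k] R) (ψ : RBF k X →ₗ[k] R)
    (h1 : ψ RBF.one = 1)
    (hmul : ∀ a b : RBF k X, ψ (RBF.mul lam a b) = ψ a * ψ b)
    (hB : ∀ a : RBF k X, ψ (RBF.Bplus a) = P (ψ a))
    (hiX : ∀ x : X, ψ (RBF.iX x) = f x) :
    ∀ T : ATree X, ψ (RBF.of (.single T)) = phiT f P T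
  | .leaf => h1
  | .graft F => by
      have hb : RBF.of (AForest.single (ATree.graft F)) = RBF.Bplus (k := k) (RBF.of F) := by
        simp [RBF.Bplus, RBF.of, Finsupp.lmapDomain_apply, Finsupp.mapDomain_single]
      rw [hb, hB, uniq_F lam f P ψ h1 hmul hB hiX F]
      simp [phiT]
theorem uniq_F (lam : k) (f : X → R) (P : R →ₗ[k] R) (ψ : RBF k X →ₗ[k] R)
    (h1 : ψ RBF.one = 1)
    (hmul : ∀ a b : RBF k X, ψ (RBF.mul lam a b) = ψ a * ψ b)
    (hB : ∀ a : RBF k X, ψ (RBF.Bplus a) = P (ψ a))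
    (hiX : ∀ x : X, ψ (RBF.iX x) = f x) :
    ∀ F : AForest X, ψ (RBF.of F) = phiF f P F
  | .single T => uniq_T lam f P ψ h1 hmul hB hiX T
  | .cons T x G => by
      rw [of_cons lam, hmul, hmul, hiX, uniq_T lam f P ψ h1 hmul hB hiX T,
        uniq_F lam f P ψ h1 hmul hB hiX G]
      simp [phiF]
end

end FreeRBAux

/-- `(kF_X^a, ⋄ₐ, B⁺)` together with `i_X : X → kF_X^a`, `x ↦ •x•`,
is the free non-commutative unitary Rota-Baxter algebra of weight `λ` on `X`: for any
unitary Rota-Baxter `k`-algebra `(R, P)` of weight `λ` and any map `f : X → R`, there is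
a unique `k`-linear map `φ : kF_X^a → R` which is a unital algebra homomorphism
satisfying `φ ∘ B⁺ = P ∘ φ` and `φ ∘ i_X = f`. -/
theorem rbf_is_free_rota_baxter_algebra (k X : Type) [CommRing k] (lam : k)
    (R : Type) [Ring R] [Algebra k R] (P : R →ₗ[k] R)
    (hP : ∀ u v : R, P u * P v = P (u * P v) + P (P u * v) + lam • P (u * v))
    (f : X → R) :
    ∃! φ : RBF k X →ₗ[k] R,
      φ RBF.one = 1
      ∧ (∀ a b : RBF k X, φ (RBF.mul lam a b) = φ a * φ b)
      ∧ (∀ a : RBF k X, φ (RBF.Bplus a) = P (φ a))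
      ∧ (∀ x : X, φ (RBF.iX x) = f x) := by
  refine ⟨phiHatF f P, ⟨?_, ?_, ?_, ?_⟩, ?_⟩
  · simp [phiHatF, RBF.one, phiF, phiT]
  · have hb : ∀ F F' : AForest X,
        phiHatF f P (RBF.mul lam (RBF.of F) (RBF.of F'))
          = phiHatF f P (RBF.of F) * phiHatF f P (RBF.of F') := by
      intro F F'
      rw [mul_basic, mulF_hom lam f P hP F F', phiHatF_of, phiHatF_of]
    intro a b
    induction a using Finsupp.induction_linear with
    | zero => simp
    | add u v hu hv => simp [map_add, LinearMap.add_apply, add_mul, hu, hv]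
    | single F c =>
      induction b using Finsupp.induction_linear with
      | zero => simp
      | add u v hu hv => simp [map_add, mul_add, hu, hv]
      | single F' c' =>
        have e1 : (Finsupp.single F c : RBF k X) = c • RBF.of F := by
          simp [RBF.of, Finsupp.smul_single]
        have e2 : (Finsupp.single F' c' : RBF k X) = c' • RBF.of F' := by
          simp [RBF.of, Finsupp.smul_single]
        rw [e1, e2]
        simp only [map_smul, LinearMap.smul_apply, smul_mul_assoc, mul_smul_comm, smul_smul]
        rw [hb F F']
  · have hkey : phiHatF f P ∘ₗ RBF.Bplus = P ∘ₗ phiHatF f P := by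
      apply Finsupp.lhom_ext
      intro F c
      simp [RBF.Bplus, Finsupp.lmapDomain_apply, Finsupp.mapDomain_single,
        phiHatF, phiF, phiT, map_smul]
    exact fun a => LinearMap.congr_fun hkey a
  · intro x
    simp [RBF.iX, RBF.of, phiHatF, phiF, phiT]
  · rintro ψ ⟨h1, hmul, hB, hiX⟩
    apply Finsupp.lhom_ext
    intro F c
    have hF := uniq_F lam f P ψ h1 hmul hB hiX F
    have e1 : (Finsupp.single F c : RBF k X) = c • RBF.of F := by
      simp [RBF.of, Finsupp.smul_single]
    rw [e1, map_smul, map_smul, hF, phiHatF_of]
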